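/- Let θ₀, θ∞ be complex constants and let U ⊆ ℂ be an open set not containing 0. Suppose f, g : ℂ → ℂ are differentiable on U and satisfy the Its–Prokhorov Hamiltonian system f'(t) = (4 f(t)² g(t) + 2t − 2t f(t)² + (4θ∞ − 1) f(t))/t and g'(t) = −(4 f(t) g(t)² + (4θ∞ − 1 − 4 t f(t)) g(t) − 2t(θ₀ + θ∞))/t for all t ∈ U, and that f(t) ≠ 0 on U. Then f satisfies the third Painlevé equation f''(t) = f'(t)²/f(t) − f'(t)/t + (α f(t)² + β)/t + γ f(t)³ + δ/f(t) on U with parameters α = 8θ₀, β = 4 − 8θ∞, γ = 4, δ = −4. -/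

import Mathlib

/-- Solutions of the Its–Prokhorov Hamiltonian system for PIII give
solutions of the third Painlevé equation with parameters
`α = 8θ₀`, `β = 4 − 8θ∞`, `γ = 4`, `δ = −4`. -/
theorem IP_system_gives_PIII (θ₀ θinf : ℂ) (U : Set ℂ)
    (hU : IsOpen U) (hU0 : (0 : ℂ) ∉ U) (f g : ℂ → ℂ)
    (hf : ∀ t ∈ U, HasDerivAt f
      ((4 * (f t) ^ 2 * g t + 2 * t - 2 * t * (f t) ^ 2 + (4 * θinf - 1) * f t) / t) t)
    (hg : ∀ t ∈ U, HasDerivAt g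
      (-((4 * f t * (g t) ^ 2 + (4 * θinf - 1 - 4 * t * f t) * g t
        - 2 * t * (θ₀ + θinf)) / t)) t)
    (hfne : ∀ t ∈ U, f t ≠ 0) :
    ∀ t ∈ U, deriv (deriv f) t =
      (deriv f t) ^ 2 / f t - deriv f t / t
        + ((8 * θ₀) * (f t) ^ 2 + (4 - 8 * θinf)) / t
        + 4 * (f t) ^ 3 + (-4) / f t := by
  intro t ht
  have htne : t ≠ 0 := fun h => hU0 (h ▸ ht)
  have hfne' : f t ≠ 0 := hfne t ht
  set F : ℂ → ℂ := fun s =>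
    (4 * (f s) ^ 2 * g s + 2 * s - 2 * s * (f s) ^ 2 + (4 * θinf - 1) * f s) / s with hF
  have hfd : HasDerivAt f (F t) t := hf t ht
  have hgd := hg t ht
  -- deriv f agrees with F on a neighborhood of t
  have hev : deriv f =ᶠ[nhds t] F := by
    filter_upwards [hU.mem_nhds ht] with s hs
    exact (hf s hs).deriv
  have hd2 : deriv (deriv f) t = deriv F t := hev.deriv_eq
  -- compute deriv F t
  set f' := F t with hf'
  set g' := -((4 * f t * (g t) ^ 2 + (4 * θinf - 1 - 4 * t * f t) * g t
        - 2 * t * (θ₀ + θinf)) / t) with hg'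
  have hnum : HasDerivAt (fun s =>
      4 * (f s) ^ 2 * g s + 2 * s - 2 * s * (f s) ^ 2 + (4 * θinf - 1) * f s)
      (4 * (2 * f t * f') * g t + 4 * (f t) ^ 2 * g' + 2
        - (2 * (f t) ^ 2 + 2 * t * (2 * f t * f')) + (4 * θinf - 1) * f') t := by
    have h1 : HasDerivAt (fun s => (f s) ^ 2) (2 * f t * f') t := by
      have := hfd.pow 2
      exact this.congr_deriv (by simp [mul_comm, mul_assoc, mul_left_comm])
    have h2 : HasDerivAt (fun s => 4 * (f s) ^ 2 * g s)
        (4 * (2 * f t * f') * g t + 4 * (f t) ^ 2 * g') t := by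
      have := (h1.const_mul 4).mul hgd
      exact this.congr_deriv (by simp [mul_comm, mul_assoc, mul_left_comm])
    have h3 : HasDerivAt (fun s : ℂ => 2 * s) 2 t := by
      simpa using (hasDerivAt_id t).const_mul 2
    have h4 : HasDerivAt (fun s => 2 * s * (f s) ^ 2)
        (2 * (f t) ^ 2 + 2 * t * (2 * f t * f')) t := by
      exact h3.mul h1
    have h5 : HasDerivAt (fun s => (4 * θinf - 1) * f s) ((4 * θinf - 1) * f') t :=
      hfd.const_mul _
    exact ((h2.add h3).sub h4).add h5
  have hFd : HasDerivAt F
      (((4 * (2 * f t * f') * g t + 4 * (f t) ^ 2 * g' + 2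
        - (2 * (f t) ^ 2 + 2 * t * (2 * f t * f')) + (4 * θinf - 1) * f') * t
        - (4 * (f t) ^ 2 * g t + 2 * t - 2 * t * (f t) ^ 2 + (4 * θinf - 1) * f t) * 1)
        / t ^ 2) t := hnum.div (hasDerivAt_id t) htne
  have hder : deriv f t = f' := hfd.deriv
  rw [hd2, hFd.deriv, hder]
  have key : ∀ a b s F' G' : ℂ, a ≠ 0 → s ≠ 0 →
      F' = (4 * a ^ 2 * b + 2 * s - 2 * s * a ^ 2 + (4 * θinf - 1) * a) / s →
      G' = -((4 * a * b ^ 2 + (4 * θinf - 1 - 4 * s * a) * b - 2 * s * (θ₀ + θinf)) / s) →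
      ((4 * (2 * a * F') * b + 4 * a ^ 2 * G' + 2
        - (2 * a ^ 2 + 2 * s * (2 * a * F')) + (4 * θinf - 1) * F') * s
        - (4 * a ^ 2 * b + 2 * s - 2 * s * a ^ 2 + (4 * θinf - 1) * a) * 1) / s ^ 2
      = F' ^ 2 / a - F' / s + (8 * θ₀ * a ^ 2 + (4 - 8 * θinf)) / s
        + 4 * a ^ 3 + (-4) / a := by
    intro a b s F' G' ha hs hF' hG'
    subst hF' hG'
    rw [← sub_eq_zero]
    field_simp
    have hD : s ^ 2 * a * (s * s) * s ≠ 0 := by simp [ha, hs]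
    field_simp [hD]
    ring
  exact key (f t) (g t) t f' g' hfne' htne hf' hg'
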